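/- Any Lie subalgebra of a regular finite-dimensional Lie algebra over an infinite field is regular. -/

import Mathlib

open LinearMap Module Polynomial

section factor
variable {K V : Type*} [Field K] [AddCommGroup V] [Module K V] [Module.Finite K V]

lemma aux_charpoly_factor (f : Module.End K V) (p : Submodule K V)
    (hf : ∀ x ∈ p, f x ∈ p) :
    f.charpoly = (f.restrict hf).charpoly *
      (p.mapQ p f (fun x hx => hf x hx)).charpoly := by
  obtain ⟨q, hq⟩ := p.exists_isCompl
  let b₁ := Module.finBasis K p
  let b₂ := Module.finBasis K q
  let e := p.prodEquivOfIsCompl q hq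
  let b := (b₁.prod b₂).map e
  let eQ := p.quotientEquivOfIsCompl q hq
  set g : Module.End K q := eQ.conj (p.mapQ p f (fun x hx => hf x hx)) with hg
  have heq : ∀ v : V, eQ (Submodule.Quotient.mk v) = q.projectionOnto p hq.symm v := by
    intro v
    apply eQ.symm.injective
    rw [LinearEquiv.symm_apply_apply, Submodule.quotientEquivOfIsCompl_symm_apply,
      Submodule.Quotient.eq]
    have h2 : v - ↑(q.projectionOnto p hq.symm v)
        = ↑(p.projectionOnto q hq v) :=
      sub_eq_of_eq_add (Submodule.projection_add_projection_eq_self hq v).symm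
    rw [h2]; exact (p.projectionOnto q hq v).2
  have hsymm : ∀ v : V, e.symm v =
      (p.projectionOnto q hq v, q.projectionOnto p hq.symm v) := by
    intro v
    apply e.injective
    rw [LinearEquiv.apply_symm_apply, Submodule.coe_prodEquivOfIsCompl']
    exact (Submodule.projection_add_projection_eq_self hq v).symm
  have hrepr₁ : ∀ (v : V) i, b.repr v (Sum.inl i)
      = b₁.repr (p.projectionOnto q hq v) i := by
    intro v i
    simp only [b, Basis.map_repr, LinearEquiv.trans_apply, hsymm, Basis.prod_repr_inl]
  have hrepr₂ : ∀ (v : V) i, b.repr v (Sum.inr i)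
      = b₂.repr (q.projectionOnto p hq.symm v) i := by
    intro v i
    simp only [b, Basis.map_repr, LinearEquiv.trans_apply, hsymm, Basis.prod_repr_inr]
  have hbl : ∀ j, b (Sum.inl j) = ↑(b₁ j) := by
    intro j
    simp only [b, Basis.map_apply, Basis.prod_apply, Sum.elim_inl]
    simp [e, Submodule.coe_prodEquivOfIsCompl']
  have hbr : ∀ j, b (Sum.inr j) = ↑(b₂ j) := by
    intro j
    simp only [b, Basis.map_apply, Basis.prod_apply, Sum.elim_inr]
    simp [e, Submodule.coe_prodEquivOfIsCompl']
  have hM : toMatrix b b f = Matrix.fromBlocks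
      (toMatrix b₁ b₁ (f.restrict hf)) ((toMatrix b b f).toBlocks₁₂)
      0 (toMatrix b₂ b₂ g) := by
    ext i j
    cases i with
    | inl i =>
      cases j with
      | inl j =>
        rw [Matrix.fromBlocks_apply₁₁, toMatrix_apply, toMatrix_apply, hbl, hrepr₁]
        have hmem : f ↑(b₁ j) ∈ p := hf _ (b₁ j).2
        have h1 : p.projectionOnto q hq (f ↑(b₁ j))
            = ⟨f ↑(b₁ j), hmem⟩ := Submodule.projectionOnto_apply_left hq ⟨f ↑(b₁ j), hmem⟩
        have h2 : (f.restrict hf) (b₁ j) = ⟨f ↑(b₁ j), hmem⟩ :=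
          Subtype.ext (by rw [LinearMap.restrict_coe_apply])
        rw [h1, h2]
      | inr j => rfl
    | inr i =>
      cases j with
      | inl j =>
        rw [Matrix.fromBlocks_apply₂₁, toMatrix_apply, hbl, hrepr₂]
        rw [Submodule.projectionOnto_apply_of_mem_right hq.symm (hf _ (b₁ j).2)]
        simp
      | inr j =>
        rw [Matrix.fromBlocks_apply₂₂, toMatrix_apply, toMatrix_apply, hbr, hrepr₂]
        have h1 : g (b₂ j) = q.projectionOnto p hq.symm (f ↑(b₂ j)) := by
          rw [hg, LinearEquiv.conj_apply_apply]
          have h2 : eQ.symm (b₂ j) = Submodule.Quotient.mk ↑(b₂ j) :=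
            Submodule.quotientEquivOfIsCompl_symm_apply p q hq (b₂ j)
          rw [h2, Submodule.mapQ_apply, heq]
        rw [h1]
  calc f.charpoly = (toMatrix b b f).charpoly := (LinearMap.charpoly_toMatrix f b).symm
    _ = (toMatrix b₁ b₁ (f.restrict hf)).charpoly * (toMatrix b₂ b₂ g).charpoly := by
        rw [hM, Matrix.charpoly_fromBlocks_zero₂₁]
    _ = (f.restrict hf).charpoly * g.charpoly := by
        rw [LinearMap.charpoly_toMatrix, LinearMap.charpoly_toMatrix]
    _ = _ := by rw [hg, LinearEquiv.charpoly_conj]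

end factor

section adQ
variable (K : Type*) {L : Type*} [Field K] [LieRing L] [LieAlgebra K L] (S : LieSubalgebra K L)

lemma adQ_mem (x : ↥S) : ∀ y ∈ S.toSubmodule, LieAlgebra.ad K L ↑x y ∈ S.toSubmodule := by
  intro y hy
  rw [LieAlgebra.ad_apply]
  exact S.lie_mem x.2 hy

/-- The family of endomorphisms of `L ⧸ S` induced by `ad` of elements of `S`. -/
noncomputable def adQ : ↥S →ₗ[K] Module.End K (L ⧸ S.toSubmodule) where
  toFun x := S.toSubmodule.mapQ S.toSubmodule (LieAlgebra.ad K L ↑x)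
    (fun y hy => adQ_mem K S x y hy)
  map_add' x y := by
    ext w
    simp [Submodule.mapQ_apply, Submodule.mkQ_apply]
  map_smul' c x := by
    ext w
    have hc : ((c • x : ↥S) : L) = c • (↑x : L) := rfl
    simp [Submodule.mapQ_apply, Submodule.mkQ_apply, Submodule.Quotient.mk_smul,
      hc, smul_lie]

end adQ

open LinearMap in
lemma exists_isNilRegular_pair {K L M₁ M₂ : Type*} [Field K] [Infinite K]
    [AddCommGroup L] [Module K L] [Module.Finite K L]
    [AddCommGroup M₁] [Module K M₁] [Module.Finite K M₁]
    [AddCommGroup M₂] [Module K M₂] [Module.Finite K M₂]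
    (φ₁ : L →ₗ[K] Module.End K M₁) (φ₂ : L →ₗ[K] Module.End K M₂) :
    ∃ x : L, IsNilRegular φ₁ x ∧ IsNilRegular φ₂ x := by
  let b := Module.Free.chooseBasis K L
  have h1 := polyCharpoly_coeff_nilRank_ne_zero φ₁ b
  have h2 := polyCharpoly_coeff_nilRank_ne_zero φ₂ b
  have h12 : (polyCharpoly φ₁ b).coeff (nilRank φ₁) * (polyCharpoly φ₂ b).coeff (nilRank φ₂)
      ≠ 0 := mul_ne_zero h1 h2
  obtain ⟨r, hr⟩ : ∃ r : _ → K, MvPolynomial.eval r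
      ((polyCharpoly φ₁ b).coeff (nilRank φ₁) * (polyCharpoly φ₂ b).coeff (nilRank φ₂)) ≠ 0 := by
    by_contra! h0
    exact h12 (MvPolynomial.funext (fun z => by rw [h0 z, map_zero]))
  rw [map_mul] at hr
  refine ⟨b.repr.symm (Finsupp.equivFunOnFinite.symm r), ?_, ?_⟩
  · rw [isNilRegular_iff_coeff_polyCharpoly_nilRank_ne_zero _ b, LinearEquiv.apply_symm_apply]
    simpa using (mul_ne_zero_iff.mp hr).1
  · rw [isNilRegular_iff_coeff_polyCharpoly_nilRank_ne_zero _ b, LinearEquiv.apply_symm_apply]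
    simpa using (mul_ne_zero_iff.mp hr).2

attribute [local instance 100] LieRing.ofAssociativeRing

/-- Any Lie subalgebra of a regular finite-dimensional Lie algebra over an infinite field
is regular. -/
theorem lieSubalgebra_of_regular_isRegular
    (K L : Type*) [Field K] [Infinite K] [LieRing L] [LieAlgebra K L]
    [Module.Finite K L]
    (hreg : ∀ x : L, x ≠ 0 → LieAlgebra.IsRegular K x)
    (S : LieSubalgebra K L) :
    ∀ x : S, x ≠ 0 → LieAlgebra.IsRegular K x := by
  intro x hx
  have hres : ∀ y : ↥S, (LieAlgebra.ad K L ↑y).restrict (adQ_mem K S y)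
      = LieAlgebra.ad K ↥S y := by
    intro y
    ext z
    rw [LinearMap.restrict_coe_apply]
    exact (LieSubalgebra.coe_ad K L S y z).symm
  have key : ∀ y : ↥S, (LieAlgebra.ad K L ↑y).charpoly.natTrailingDegree
      = (LieAlgebra.ad K ↥S y).charpoly.natTrailingDegree
        + ((adQ K S) y).charpoly.natTrailingDegree := by
    intro y
    have h := aux_charpoly_factor (LieAlgebra.ad K L ↑y) S.toSubmodule (adQ_mem K S y)
    rw [hres y] at h
    rw [h, Polynomial.natTrailingDegree_mul (LinearMap.charpoly_monic _).ne_zero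
      (LinearMap.charpoly_monic _).ne_zero]
    rfl
  obtain ⟨y, hy1, hy2⟩ := exists_isNilRegular_pair
    ((LieModule.toEnd K ↥S ↥S).toLinearMap) (adQ K S)
  have hy1' : (LieAlgebra.ad K ↥S y).charpoly.natTrailingDegree = LieAlgebra.rank K ↥S :=
    (LieAlgebra.isRegular_iff_natTrailingDegree_charpoly_eq_rank K y).mp hy1
  have hy2' : ((adQ K S) y).charpoly.natTrailingDegree = LinearMap.nilRank (adQ K S) :=
    (LinearMap.isNilRegular_iff_natTrailingDegree_charpoly_eq_nilRank _ y).mp hy2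
  have hrankL : LieAlgebra.rank K L ≤ LieAlgebra.rank K ↥S + LinearMap.nilRank (adQ K S) := by
    have := LieAlgebra.rank_le_natTrailingDegree_charpoly_ad K (↑y : L)
    rw [key y, hy1', hy2'] at this
    exact this
  have hxL : (LieAlgebra.ad K L ↑x).charpoly.natTrailingDegree = LieAlgebra.rank K L :=
    (LieAlgebra.isRegular_iff_natTrailingDegree_charpoly_eq_rank K (↑x : L)).mp
      (hreg ↑x (by simpa using hx))
  have h1 : LieAlgebra.rank K ↥S ≤ (LieAlgebra.ad K ↥S x).charpoly.natTrailingDegree :=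
    LieAlgebra.rank_le_natTrailingDegree_charpoly_ad K x
  have h2 : LinearMap.nilRank (adQ K S) ≤ ((adQ K S) x).charpoly.natTrailingDegree :=
    LinearMap.nilRank_le_natTrailingDegree_charpoly _ x
  have hkx := key x
  rw [LieAlgebra.isRegular_iff_natTrailingDegree_charpoly_eq_rank]
  omega
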